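/- Assume the setting below (either case, i.e. G(X) = X^{q^{m_0}} + (intermediate terms) + C X^{q^k} with m_0 < 2t and also the case m_0 = 2t, C ≠ 0, and F(X) = X + δX^{q^{2t}} with δ ≠ 0, 0 < 2t < k). Then the homogeneous component of F_C(X,Y) of degree q^k + q^{2t} equals λ^{q^t} δ C · (X^{q^{2t}} Y^{q^k} − X^{q^k} Y^{q^{2t}}), and every monomial of F_C has total degree at most q^k + q^{2t}; in particular F_C has total degree exactly q^k + q^{2t}. -/

import Mathlib

open MvPolynomial

noncomputable section

/-- A `q`-polynomial with coefficient function `g` supported in `[0,k]`, applied to a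
bivariate polynomial. -/
def GPg (q k : ℕ) {Ω : Type*} [Field Ω] (g : ℕ → Ω) (u : MvPolynomial (Fin 2) Ω) :
    MvPolynomial (Fin 2) Ω :=
  ∑ i ∈ Finset.range (k + 1), C (g i) * u ^ q ^ i

/-- Its value at `x`. -/
def Gvalg (q k : ℕ) {Ω : Type*} [Field Ω] (g : ℕ → Ω) (x : Ω) : Ω :=
  ∑ i ∈ Finset.range (k + 1), g i * x ^ q ^ i

/-- `F(x) = x + δ x^(q^(2t))` (value at `x`). -/
def Fval (q t : ℕ) {Ω : Type*} [Field Ω] (δ x : Ω) : Ω := x + δ * x ^ q ^ (2 * t)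

/-- `F` applied to a bivariate polynomial. -/
def FP (q t : ℕ) {Ω : Type*} [Field Ω] (δ : Ω) (u : MvPolynomial (Fin 2) Ω) :
    MvPolynomial (Fin 2) Ω := u + C δ * u ^ q ^ (2 * t)

/-- The affine equation `F_C(X,Y)` of the curve `C`. -/
def FCg (q t k : ℕ) {Ω : Type*} [Field Ω] (δ : Ω) (g : ℕ → Ω) (l : Ω) :
    MvPolynomial (Fin 2) Ω :=
  Matrix.det !![(X 0) ^ q ^ t, FP q t δ (X 0), GPg q k g (X 0);
                (X 1) ^ q ^ t, FP q t δ (X 1), GPg q k g (X 1);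
                C (l ^ q ^ t), C (Fval q t δ l), C (Gvalg q k g l)]

/-- The low part of the `q`-polynomial `G`, on variable `j`. -/
def Glow (q k : ℕ) {Ω : Type*} [Field Ω] (g : ℕ → Ω) (j : Fin 2) :
    MvPolynomial (Fin 2) Ω :=
  ∑ i ∈ Finset.range k, C (g i) * (X j) ^ q ^ i

/-- The remainder term in the decomposition of `F_C`. -/
def Rrem (q t k : ℕ) {Ω : Type*} [Field Ω] (δ : Ω) (g : ℕ → Ω) (l : Ω) :
    MvPolynomial (Fin 2) Ω :=
  (X 0) ^ q ^ t * (FP q t δ (X 1) * C (Gvalg q k g l)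
        - C (Fval q t δ l) * GPg q k g (X 1))
    - X 0 * (X 1) ^ q ^ t * C (Gvalg q k g l)
    - C δ * (X 0) ^ q ^ (2*t) * (X 1) ^ q ^ t * C (Gvalg q k g l)
    + C (l ^ q ^ t) * X 0 * GPg q k g (X 1)
    + C (l ^ q ^ t * δ) * (X 0) ^ q ^ (2*t) * Glow q k g 1
    + GPg q k g (X 0) * (X 1) ^ q ^ t * C (Fval q t δ l)
    - C (l ^ q ^ t) * GPg q k g (X 0) * X 1
    - C (l ^ q ^ t * δ) * Glow q k g 0 * (X 1) ^ q ^ (2*t)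

lemma FCg_decomp (q t k : ℕ) {Ω : Type*} [Field Ω] (δ : Ω) (g : ℕ → Ω) (l : Ω) :
    FCg q t k δ g l =
      C (l ^ q ^ t * δ * g k) *
          ((X 0) ^ q ^ (2*t) * (X 1) ^ q ^ k - (X 0) ^ q ^ k * (X 1) ^ q ^ (2*t))
      + Rrem q t k δ g l := by
  have hG0 : GPg q k g (X 0 : MvPolynomial (Fin 2) Ω)
      = Glow q k g 0 + C (g k) * (X 0) ^ q ^ k := Finset.sum_range_succ _ _
  have hG1 : GPg q k g (X 1 : MvPolynomial (Fin 2) Ω)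
      = Glow q k g 1 + C (g k) * (X 1) ^ q ^ k := Finset.sum_range_succ _ _
  rw [FCg, Rrem, Matrix.det_fin_three]
  norm_num [Matrix.cons_val_zero, Matrix.cons_val_one, Matrix.cons_val_two, Matrix.head_cons, Matrix.tail_cons]
  rw [hG0, hG1]
  simp only [FP, map_mul]
  ring

/-- In either setting (`G(X) = X^(q^(m₀)) + … + C X^(q^k)` with
`m₀ ≤ 2t`, `C ≠ 0`, `F(X) = X + δX^(q^(2t))`, `δ ≠ 0`, `0 < 2t < k`): the homogeneous
component of `F_C` of degree `q^k + q^(2t)` equals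
`λ^(q^t) δ C (X^(q^(2t)) Y^(q^k) − X^(q^k) Y^(q^(2t)))`, and every monomial of `F_C` has
total degree at most `q^k + q^(2t)`; in particular the total degree is exactly
`q^k + q^(2t)`. -/
theorem stmt_17 (q n t k m0 : ℕ)
    (F0 : Type) [Field F0] [Fintype F0] (hF0 : Fintype.card F0 = q)
    (ht : 0 < t) (h2tk : 2 * t < k) (hkn : k < n) (hm0 : m0 ≤ 2 * t)
    (δ l : AlgebraicClosure F0) (g : ℕ → AlgebraicClosure F0)
    (hδK : δ ^ q ^ n = δ) (hlK : l ^ q ^ n = l) (hgK : ∀ i, g i ^ q ^ n = g i)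
    (hδ : δ ≠ 0)
    (hgm0 : g m0 = 1) (hglow : ∀ i, i < m0 → g i = 0) (hgk : g k ≠ 0)
    (hlq : l ^ q ≠ l)
    (hFl : Fval q t δ l ≠ 0) (hGl : Gvalg q k g l ≠ 0) :
    homogeneousComponent (q ^ k + q ^ (2 * t)) (FCg q t k δ g l)
        = C (l ^ q ^ t * δ * g k)
            * ((X 0) ^ q ^ (2 * t) * (X 1) ^ q ^ k
                - (X 0) ^ q ^ k * (X 1) ^ q ^ (2 * t)) ∧
    (FCg q t k δ g l).totalDegree ≤ q ^ k + q ^ (2 * t) ∧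
    (FCg q t k δ g l).totalDegree = q ^ k + q ^ (2 * t) := by
  classical
  have hq : 1 < q := hF0 ▸ Fintype.one_lt_card
  have htt : t < 2 * t := by omega
  have hkpos : 0 < k := by omega
  set NN := q ^ k + q ^ (2 * t) with hNN
  have hTs : q ^ t < q ^ (2 * t) := Nat.pow_lt_pow_right hq htt
  have hsK : q ^ (2 * t) < q ^ k := Nat.pow_lt_pow_right hq h2tk
  have h1s : 1 < q ^ (2 * t) := Nat.one_lt_pow (by omega) hq
  have h1K : 1 < q ^ k := Nat.one_lt_pow (by omega) hq
  -- degree bounds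
  have dCmul : ∀ (c : AlgebraicClosure F0) (p : MvPolynomial (Fin 2) (AlgebraicClosure F0)),
      (C c * p).totalDegree ≤ p.totalDegree := by
    intro c p
    calc (C c * p).totalDegree ≤ (C c).totalDegree + p.totalDegree := totalDegree_mul _ _
    _ = p.totalDegree := by rw [totalDegree_C, Nat.zero_add]
  have dmulC : ∀ (c : AlgebraicClosure F0) (p : MvPolynomial (Fin 2) (AlgebraicClosure F0)),
      (p * C c).totalDegree ≤ p.totalDegree := by
    intro c p; rw [mul_comm]; exact dCmul c p
  have dFP : ∀ j : Fin 2, (FP q t δ (X j : MvPolynomial (Fin 2) (AlgebraicClosure F0))).totalDegree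
      ≤ q ^ (2 * t) := by
    intro j
    refine (totalDegree_add _ _).trans (max_le ?_ ?_)
    · rw [totalDegree_X]; omega
    · exact (dCmul _ _).trans (by rw [totalDegree_X_pow])
  have dGP : ∀ j : Fin 2, (GPg q k g (X j : MvPolynomial (Fin 2) (AlgebraicClosure F0))).totalDegree
      ≤ q ^ k := by
    intro j
    refine totalDegree_finsetSum_le fun i hi => ?_
    refine (dCmul _ _).trans ?_
    rw [totalDegree_X_pow]
    exact Nat.pow_le_pow_right (by omega) (Nat.lt_succ_iff.mp (Finset.mem_range.mp hi))
  have dGlow : ∀ j : Fin 2, (Glow q k g j : MvPolynomial (Fin 2) (AlgebraicClosure F0)).totalDegree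
      < q ^ k := by
    intro j
    have : (Glow q k g j : MvPolynomial (Fin 2) (AlgebraicClosure F0)).totalDegree
        ≤ q ^ (k - 1) := by
      refine totalDegree_finsetSum_le fun i hi => ?_
      refine (dCmul _ _).trans ?_
      rw [totalDegree_X_pow]
      exact Nat.pow_le_pow_right (by omega) (by
        have := Finset.mem_range.mp hi; omega)
    exact lt_of_le_of_lt this (Nat.pow_lt_pow_right hq (by omega))
  have hg0 := dGlow 0
  have hg1 := dGlow 1
  -- remainder bound
  have cadd : ∀ p r : MvPolynomial (Fin 2) (AlgebraicClosure F0),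
      p.totalDegree < NN → r.totalDegree < NN → (p + r).totalDegree < NN := fun p r hp hr =>
    lt_of_le_of_lt (totalDegree_add p r) (max_lt hp hr)
  have csub : ∀ p r : MvPolynomial (Fin 2) (AlgebraicClosure F0),
      p.totalDegree < NN → r.totalDegree < NN → (p - r).totalDegree < NN := fun p r hp hr =>
    lt_of_le_of_lt (totalDegree_sub p r) (max_lt hp hr)
  have hR : (Rrem q t k δ g l).totalDegree < NN := by
    rw [Rrem]
    refine csub _ _ (csub _ _ (cadd _ _ (cadd _ _ (cadd _ _ (csub _ _ (csub _ _ ?_ ?_) ?_)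
      ?_) ?_) ?_) ?_) ?_
    · -- X0^T * (FP1 * Cc - Cb * GP1)
      refine lt_of_le_of_lt ((totalDegree_mul _ _).trans (add_le_add
        (le_of_eq (totalDegree_X_pow _ _))
        ((totalDegree_sub _ _).trans (max_le ((dmulC _ _).trans ((dFP 1).trans hsK.le))
          ((dCmul _ _).trans (dGP 1)))))) ?_
      omega
    · -- X0 * X1^T * Cc
      refine lt_of_le_of_lt ((dmulC _ _).trans ((totalDegree_mul _ _).trans
        (add_le_add (totalDegree_X _).le (le_of_eq (totalDegree_X_pow _ _))))) ?_
      omega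
    · -- Cδ * X0^s * X1^T * Cc
      refine lt_of_le_of_lt ((dmulC _ _).trans ((totalDegree_mul _ _).trans
        (add_le_add ((dCmul _ _).trans (le_of_eq (totalDegree_X_pow _ _)))
          (le_of_eq (totalDegree_X_pow _ _))))) ?_
      omega
    · -- Ca * X0 * GP1
      refine lt_of_le_of_lt ((totalDegree_mul _ _).trans (add_le_add
        ((dCmul _ _).trans (totalDegree_X _).le) (dGP 1))) ?_
      omega
    · -- C(aδ) * X0^s * Glow1
      refine lt_of_le_of_lt ((totalDegree_mul _ _).trans (Nat.add_le_add
        ((dCmul _ _).trans (le_of_eq (totalDegree_X_pow _ _))) le_rfl)) ?_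
      omega
    · -- GP0 * X1^T * Cb
      refine lt_of_le_of_lt ((dmulC _ _).trans ((totalDegree_mul _ _).trans
        (add_le_add (dGP 0) (le_of_eq (totalDegree_X_pow _ _))))) ?_
      omega
    · -- Ca * GP0 * X1
      refine lt_of_le_of_lt ((totalDegree_mul _ _).trans (add_le_add
        ((dCmul _ _).trans (dGP 0)) (totalDegree_X _).le)) ?_
      omega
    · -- C(aδ) * Glow0 * X1^s
      refine lt_of_le_of_lt ((totalDegree_mul _ _).trans (Nat.add_le_add
        (dCmul _ _) (le_of_eq (totalDegree_X_pow _ _)))) ?_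
      omega
  -- the main term
  set main : MvPolynomial (Fin 2) (AlgebraicClosure F0) := C (l ^ q ^ t * δ * g k) *
      ((X 0) ^ q ^ (2*t) * (X 1) ^ q ^ k - (X 0) ^ q ^ k * (X 1) ^ q ^ (2*t)) with hmaindef
  have hmain_hom : main.IsHomogeneous NN := by
    refine IsHomogeneous.C_mul (IsHomogeneous.sub ?_ ?_) _
    · have h' : NN = q ^ (2 * t) + q ^ k := by rw [hNN, Nat.add_comm]
      rw [h']
      exact (isHomogeneous_X_pow _ _).mul (isHomogeneous_X_pow _ _)
    · exact (isHomogeneous_X_pow _ _).mul (isHomogeneous_X_pow _ _)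
  have hl0 : l ≠ 0 := by
    intro h; apply hlq; rw [h, zero_pow (by omega : q ≠ 0)]
  have hc' : l ^ q ^ t * δ * g k ≠ 0 :=
    mul_ne_zero (mul_ne_zero (pow_ne_zero _ hl0) hδ) hgk
  have hmain_ne : main ≠ 0 := by
    intro h
    have hco : coeff (Finsupp.single (0 : Fin 2) (q ^ (2*t)) + Finsupp.single 1 (q ^ k))
        main = l ^ q ^ t * δ * g k := by
      rw [hmaindef, coeff_C_mul, coeff_sub]
      rw [X_pow_eq_monomial, X_pow_eq_monomial, monomial_mul,
        X_pow_eq_monomial, X_pow_eq_monomial, monomial_mul, one_mul]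
      rw [coeff_monomial, coeff_monomial, if_pos rfl, if_neg, sub_zero, mul_one]
      intro hEq
      have h0 := DFunLike.congr_fun hEq (0 : Fin 2)
      simp only [Finsupp.add_apply, Finsupp.single_eq_same,
        Finsupp.single_eq_of_ne' (by decide : (1 : Fin 2) ≠ 0)] at h0
      omega
    rw [h, coeff_zero] at hco
    exact hc' hco.symm
  have hmain_deg : main.totalDegree = NN := hmain_hom.totalDegree hmain_ne
  have hkey := FCg_decomp q t k δ g l
  have hcomp : homogeneousComponent NN (FCg q t k δ g l) = main := by
    rw [hkey, map_add, homogeneousComponent_eq_zero _ _ hR, add_zero,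
      homogeneousComponent_of_mem ((mem_homogeneousSubmodule _ _).mpr hmain_hom),
      if_pos rfl]
  have hle : (FCg q t k δ g l).totalDegree ≤ NN := by
    rw [hkey]
    exact (totalDegree_add _ _).trans (max_le hmain_deg.le hR.le)
  refine ⟨hcomp, hle, le_antisymm hle ?_⟩
  by_contra hlt
  push_neg at hlt
  have hz := homogeneousComponent_eq_zero NN (FCg q t k δ g l) hlt
  rw [hcomp] at hz
  exact hmain_ne hz

end
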